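/- Let X be a real Hilbert space and A, B nonempty closed convex subsets of X with A ∩ B ≠ ∅. Let {A_n}, {B_n} be sequences of nonempty closed convex subsets of X Attouch-Wets converging to A and B respectively, a₀ ∈ X, and let {a_n}, {b_n} be the corresponding perturbed alternating projections sequences. If {a_n} and {b_n} both converge in norm, then there exists c ∈ A ∩ B such that a_n → c and b_n → c in norm. -/

import Mathlib

open Filter Metric Topology
open scoped RealInnerProductSpace

/-- Attouch–Wets convergence of a sequence of sets:
for every `N`, `sup_{‖x‖ ≤ N} |dist(x, Aₙ) − dist(x, L)| → 0`. -/
def AWTendsto {X : Type*} [NormedAddCommGroup X] (A : ℕ → Set X) (L : Set X) : Prop :=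
  ∀ N : ℕ, ∀ ε : ℝ, 0 < ε → ∃ n₀ : ℕ, ∀ n ≥ n₀, ∀ x : X, ‖x‖ ≤ (N : ℝ) →
    |Metric.infDist x (A n) - Metric.infDist x L| < ε

/-- `p` is a metric projection (nearest point) of `x` onto `K`. -/
def IsProjOn {X : Type*} [NormedAddCommGroup X] (K : Set X) (x p : X) : Prop :=
  p ∈ K ∧ ∀ y ∈ K, dist x p ≤ dist x y

/-- `a`, `b` are the perturbed alternating projections sequences w.r.t. `A`, `B`
with starting point `a₀`: `bₙ = P_{Bₙ}(a_{n−1})` and `aₙ = P_{Aₙ}(bₙ)` for `n ≥ 1`. -/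
def IsPerturbedAPS {X : Type*} [NormedAddCommGroup X]
    (A B : ℕ → Set X) (a₀ : X) (a b : ℕ → X) : Prop :=
  a 0 = a₀ ∧ ∀ n : ℕ,
    IsProjOn (B (n + 1)) (a n) (b (n + 1)) ∧ IsProjOn (A (n + 1)) (b (n + 1)) (a (n + 1))

lemma AW_shift {X : Type*} [NormedAddCommGroup X] {C : ℕ → Set X} {L : Set X}
    (h : AWTendsto C L) : AWTendsto (fun n => C (n + 1)) L := by
  intro N ε hε
  obtain ⟨n₀, h₀⟩ := h N ε hε
  exact ⟨n₀, fun n hn x hx => h₀ (n + 1) (le_trans hn (Nat.le_succ n)) x hx⟩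

lemma seq_bdd {X : Type*} [NormedAddCommGroup X] {u : ℕ → X} {l : X}
    (hu : Tendsto u atTop (nhds l)) : ∃ N : ℕ, ∀ n, ‖u n‖ ≤ (N : ℝ) := by
  obtain ⟨R, hR, hRd⟩ := cauchySeq_bdd hu.cauchySeq
  refine ⟨⌈‖u 0‖ + R⌉₊, fun n => ?_⟩
  have h1 : ‖u n‖ ≤ ‖u 0‖ + dist (u n) (u 0) := by
    rw [dist_eq_norm]
    calc ‖u n‖ = ‖u 0 + (u n - u 0)‖ := by congr 1; abel
    _ ≤ ‖u 0‖ + ‖u n - u 0‖ := norm_add_le _ _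
  have h2 := (hRd n 0).le
  have h3 : ‖u 0‖ + R ≤ (⌈‖u 0‖ + R⌉₊ : ℝ) := Nat.le_ceil _
  linarith

lemma mem_of_AW {X : Type*} [NormedAddCommGroup X] {C : ℕ → Set X} {L : Set X}
    (hLc : IsClosed L) (hLne : L.Nonempty) (hAW : AWTendsto C L)
    {u : ℕ → X} {l : X} (hu : Tendsto u atTop (nhds l))
    (hmem : ∀ n, u n ∈ C n) : l ∈ L := by
  rw [hLc.mem_iff_infDist_zero hLne]
  refine le_antisymm ?_ infDist_nonneg
  refine le_of_forall_pos_le_add fun ε hε => ?_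
  obtain ⟨N, hN⟩ := seq_bdd hu
  obtain ⟨n₀, h₀⟩ := hAW N (ε / 2) (by positivity)
  obtain ⟨n₁, h₁⟩ := Metric.tendsto_atTop.mp hu (ε / 2) (by positivity)
  set n := max n₀ n₁
  have hC : infDist (u n) (C n) = 0 := infDist_zero_of_mem (hmem n)
  have habs := h₀ n (le_max_left _ _) (u n) (hN n)
  rw [hC] at habs
  have hd : infDist (u n) L < ε / 2 := by
    have := abs_lt.mp habs
    linarith [this.1]
  have hdist : dist (u n) l < ε / 2 := h₁ n (le_max_right _ _)
  have : infDist l L ≤ infDist (u n) L + dist l (u n) :=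
    infDist_le_infDist_add_dist
  rw [dist_comm] at hdist
  linarith

lemma proj_lim_le {X : Type*} [NormedAddCommGroup X] {C : ℕ → Set X} {L : Set X}
    (hAW : AWTendsto C L) (hCne : ∀ n, (C n).Nonempty)
    {u v : ℕ → X} {p q : X} (hu : Tendsto u atTop (nhds p)) (hv : Tendsto v atTop (nhds q))
    (hproj : ∀ n, IsProjOn (C n) (u n) (v n)) :
    ∀ y ∈ L, dist p q ≤ dist p y := by
  intro y hy
  refine le_of_forall_pos_le_add fun ε hε => ?_
  obtain ⟨n₀, h₀⟩ := hAW ⌈‖y‖⌉₊ ε hε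
  have hev : ∀ n ≥ n₀, dist (u n) (v n) ≤ dist (u n) y + ε := by
    intro n hn
    have habs := h₀ n hn y (Nat.le_ceil _)
    rw [infDist_zero_of_mem hy] at habs
    have hlt : infDist y (C n) < ε := by
      have := abs_lt.mp habs; linarith [this.2]
    obtain ⟨y', hy'C, hy'd⟩ := (infDist_lt_iff (hCne n)).mp hlt
    calc dist (u n) (v n) ≤ dist (u n) y' := (hproj n).2 y' hy'C
    _ ≤ dist (u n) y + dist y y' := dist_triangle _ _ _
    _ ≤ dist (u n) y + ε := by linarith [hy'd.le]
  refine le_of_tendsto_of_tendsto (hu.dist hv)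
    ((hu.dist (tendsto_const_nhds : Tendsto (fun _ : ℕ => y) atTop (nhds y))).add
      tendsto_const_nhds) ?_
  filter_upwards [eventually_ge_atTop n₀] with n hn using hev n hn

theorem stmt16 {X : Type*} [NormedAddCommGroup X] [InnerProductSpace ℝ X] [CompleteSpace X]
    (A B : Set X) (hAne : A.Nonempty) (hAc : IsClosed A) (hAv : Convex ℝ A)
    (hBne : B.Nonempty) (hBc : IsClosed B) (hBv : Convex ℝ B)
    (hAB : (A ∩ B).Nonempty)
    (An Bn : ℕ → Set X)
    (hAn : ∀ n, (An n).Nonempty ∧ IsClosed (An n) ∧ Convex ℝ (An n))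
    (hBn : ∀ n, (Bn n).Nonempty ∧ IsClosed (Bn n) ∧ Convex ℝ (Bn n))
    (hAW : AWTendsto An A) (hBW : AWTendsto Bn B)
    (a₀ : X) (a b : ℕ → X) (hab : IsPerturbedAPS An Bn a₀ a b)
    (la lb : X) (hla : Filter.Tendsto a Filter.atTop (nhds la))
    (hlb : Filter.Tendsto b Filter.atTop (nhds lb)) :
    ∃ c ∈ A ∩ B, Filter.Tendsto a Filter.atTop (nhds c) ∧
      Filter.Tendsto b Filter.atTop (nhds c) := by
  obtain ⟨h0, hstep⟩ := hab
  have hb' : Tendsto (fun n => b (n + 1)) atTop (nhds lb) :=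
    hlb.comp (tendsto_add_atTop_nat 1)
  have ha' : Tendsto (fun n => a (n + 1)) atTop (nhds la) :=
    hla.comp (tendsto_add_atTop_nat 1)
  have hlaA : la ∈ A := mem_of_AW hAc hAne (AW_shift hAW) ha' (fun n => (hstep n).2.1)
  have hlbB : lb ∈ B := mem_of_AW hBc hBne (AW_shift hBW) hb' (fun n => (hstep n).1.1)
  have hPB : ∀ y ∈ B, dist la lb ≤ dist la y :=
    proj_lim_le (AW_shift hBW) (fun n => (hBn (n + 1)).1) hla hb' (fun n => (hstep n).1)
  have hPA : ∀ y ∈ A, dist lb la ≤ dist lb y :=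
    proj_lim_le (AW_shift hAW) (fun n => (hAn (n + 1)).1) hb' ha' (fun n => (hstep n).2)
  obtain ⟨z, hzA, hzB⟩ := hAB
  haveI : Nonempty ↑A := hAne.to_subtype
  haveI : Nonempty ↑B := hBne.to_subtype
  have heqB : ‖la - lb‖ = ⨅ w : B, ‖la - (w : X)‖ := by
    refine le_antisymm (le_ciInf fun w => ?_) (ciInf_le ⟨0, ?_⟩ (⟨lb, hlbB⟩ : B))
    · have := hPB w.1 w.2
      simpa [dist_eq_norm] using this
    · rintro x ⟨w, rfl⟩; exact norm_nonneg _
  have heqA : ‖lb - la‖ = ⨅ w : A, ‖lb - (w : X)‖ := by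
    refine le_antisymm (le_ciInf fun w => ?_) (ciInf_le ⟨0, ?_⟩ (⟨la, hlaA⟩ : A))
    · have := hPA w.1 w.2
      simpa [dist_eq_norm] using this
    · rintro x ⟨w, rfl⟩; exact norm_nonneg _
  have h1 : (inner ℝ (la - lb) (z - lb) : ℝ) ≤ 0 :=
    ((norm_eq_iInf_iff_real_inner_le_zero hBv hlbB).mp heqB) z hzB
  have h2 : (inner ℝ (lb - la) (z - la) : ℝ) ≤ 0 :=
    ((norm_eq_iInf_iff_real_inner_le_zero hAv hlaA).mp heqA) z hzA
  have hkey : (inner ℝ (la - lb) (la - lb) : ℝ) ≤ 0 := by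
    have e1 : (inner ℝ (la - lb) (la - lb) : ℝ) = (inner ℝ (la - lb) (z - lb) : ℝ) - (inner ℝ (la - lb) (z - la) : ℝ) := by
      rw [← inner_sub_right]
      congr 1
      abel
    have e2 : (inner ℝ (la - lb) (z - la) : ℝ) = -(inner ℝ (lb - la) (z - la) : ℝ) := by
      rw [← inner_neg_left, neg_sub]
    rw [e1, e2]
    linarith
  have hz : la - lb = 0 := by
    have := real_inner_self_nonpos.mp hkey
    exact this
  have heq : la = lb := sub_eq_zero.mp hz
  exact ⟨la, ⟨hlaA, heq ▸ hlbB⟩, hla, heq ▸ hlb⟩
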